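/- Let $X$ be a compact metric space, $\{A^t\}$ a continuous flow on $X$, $g : X \to \mathbb{R}$ a continuous function, and $\epsilon > 0$. Suppose $\int_X g\, d\mu \geq 1 - 3\epsilon$ for every $A^t$-invariant Borel probability measure $\mu$. Then there exists $T > 0$ such that for all $t \geq T$ and all $p \in X$, the Birkhoff average satisfies $t^{-1}\int_0^t g(A^s(p))\,ds > 1 - 4\epsilon$. -/

import Mathlib

open MeasureTheory Set TopologicalSpace
open scoped NNReal ENNReal
set_option linter.unusedSectionVars false
set_option maxHeartbeats 1000000

namespace Stmt10Aux

variable {X : Type*} [MetricSpace X] [CompactSpace X]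

/-- A positive, normalized, monotone linear functional on continuous functions. -/
structure Pos (Λ : (X → ℝ) → ℝ) : Prop where
  add : ∀ f g : X → ℝ, Continuous f → Continuous g →
    Λ (fun x => f x + g x) = Λ f + Λ g
  smul : ∀ (c : ℝ) (f : X → ℝ), Continuous f → Λ (fun x => c * f x) = c * Λ f
  mono : ∀ f g : X → ℝ, Continuous f → Continuous g → (∀ x, f x ≤ g x) → Λ f ≤ Λ g
  one : Λ (fun _ => 1) = 1

variable {Λ : (X → ℝ) → ℝ}

theorem Pos.const (h : Pos Λ) (c : ℝ) : Λ (fun _ => c) = c := by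
  have := h.smul c (fun _ => 1) continuous_const
  simpa [h.one] using this

theorem Pos.nonneg (h : Pos Λ) {f : X → ℝ} (hf : Continuous f)
    (h0 : ∀ x, 0 ≤ f x) : 0 ≤ Λ f := by
  have := h.mono (fun _ => 0) f continuous_const hf h0
  simpa [h.const 0] using this

/-- The set of values of `Λ` on test functions dominating `1` on `K`. -/
def testSet (Λ : (X → ℝ) → ℝ) (K : Set X) : Set ℝ :=
  {y | ∃ f : X → ℝ, Continuous f ∧ (∀ x, 0 ≤ f x) ∧ (∀ x ∈ K, 1 ≤ f x) ∧ Λ f = y}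

theorem testSet_nonempty (h : Pos Λ) (K : Set X) : (testSet Λ K).Nonempty :=
  ⟨1, (fun _ => 1), continuous_const, fun _ => zero_le_one, fun _ _ => le_refl 1, h.one⟩

theorem testSet_bddBelow (h : Pos Λ) (K : Set X) : BddBelow (testSet Λ K) := by
  refine ⟨0, ?_⟩
  rintro y ⟨f, hfc, hf0, -, rfl⟩
  exact h.nonneg hfc hf0

/-- The Riesz content associated to `Λ`. -/
noncomputable def lamK (Λ : (X → ℝ) → ℝ) (K : Set X) : ℝ :=
  sInf (testSet Λ K)

theorem lamK_nonneg (h : Pos Λ) (K : Set X) : 0 ≤ lamK Λ K :=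
  le_csInf (testSet_nonempty h K) (by rintro y ⟨f, hfc, hf0, -, rfl⟩; exact h.nonneg hfc hf0)

theorem lamK_le (h : Pos Λ) {K : Set X} {f : X → ℝ} (hfc : Continuous f)
    (hf0 : ∀ x, 0 ≤ f x) (hf1 : ∀ x ∈ K, 1 ≤ f x) : lamK Λ K ≤ Λ f :=
  csInf_le (testSet_bddBelow h K) ⟨f, hfc, hf0, hf1, rfl⟩

theorem lamK_le_one (h : Pos Λ) (K : Set X) : lamK Λ K ≤ 1 := by
  have := lamK_le h (K := K) continuous_const (fun _ => zero_le_one) (fun _ _ => le_refl 1)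
  simpa [h.one] using this

theorem lamK_mono (h : Pos Λ) {K₁ K₂ : Set X} (hK : K₁ ⊆ K₂) :
    lamK Λ K₁ ≤ lamK Λ K₂ := by
  refine csInf_le_csInf (testSet_bddBelow h K₁) (testSet_nonempty h K₂) ?_
  rintro y ⟨f, hfc, hf0, hf1, rfl⟩
  exact ⟨f, hfc, hf0, fun x hx => hf1 x (hK hx), rfl⟩

theorem exists_test (h : Pos Λ) (K : Set X) {δ : ℝ} (hδ : 0 < δ) :
    ∃ f : X → ℝ, Continuous f ∧ (∀ x, 0 ≤ f x) ∧ (∀ x ∈ K, 1 ≤ f x) ∧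
      Λ f < lamK Λ K + δ := by
  obtain ⟨y, hy, hlt⟩ := Real.lt_sInf_add_pos (testSet_nonempty h K) hδ
  obtain ⟨f, hfc, hf0, hf1, rfl⟩ := hy
  exact ⟨f, hfc, hf0, hf1, hlt⟩

theorem lamK_union_le (h : Pos Λ) (K₁ K₂ : Set X) :
    lamK Λ (K₁ ∪ K₂) ≤ lamK Λ K₁ + lamK Λ K₂ := by
  refine le_of_forall_pos_le_add ?_
  intro δ hδ
  obtain ⟨f₁, h₁c, h₁0, h₁1, h₁⟩ := exists_test h K₁ (half_pos hδ)
  obtain ⟨f₂, h₂c, h₂0, h₂1, h₂⟩ := exists_test h K₂ (half_pos hδ)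
  have hle : lamK Λ (K₁ ∪ K₂) ≤ Λ (fun x => f₁ x + f₂ x) := by
    refine lamK_le h (h₁c.add h₂c) (fun x => add_nonneg (h₁0 x) (h₂0 x)) ?_
    rintro x (hx | hx)
    · have := h₁1 x hx; linarith [h₂0 x]
    · have := h₂1 x hx; linarith [h₁0 x]
  rw [h.add _ _ h₁c h₂c] at hle
  linarith

theorem lamK_union_eq (h : Pos Λ) {K₁ K₂ : Set X} (hK₁ : IsCompact K₁)
    (hK₂ : IsCompact K₂) (hd : Disjoint K₁ K₂) :
    lamK Λ (K₁ ∪ K₂) = lamK Λ K₁ + lamK Λ K₂ := by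
  refine le_antisymm (lamK_union_le h K₁ K₂) ?_
  refine le_csInf (testSet_nonempty h _) ?_
  rintro y ⟨f, hfc, hf0, hf1, rfl⟩
  obtain ⟨φ, hφ0, hφ1, hφmem⟩ :=
    exists_continuous_zero_one_of_isClosed hK₂.isClosed hK₁.isClosed hd.symm
  set f₁ : X → ℝ := fun x => f x * φ x with hf₁
  set f₂ : X → ℝ := fun x => f x * (1 - φ x) with hf₂
  have hφc : Continuous (φ : X → ℝ) := φ.continuous
  have h₁c : Continuous f₁ := hfc.mul hφc
  have h₂c : Continuous f₂ := hfc.mul (continuous_const.sub hφc)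
  have h₁0 : ∀ x, 0 ≤ f₁ x := fun x => mul_nonneg (hf0 x) (hφmem x).1
  have h₂0 : ∀ x, 0 ≤ f₂ x := fun x => mul_nonneg (hf0 x) (by linarith [(hφmem x).2])
  have h₁1 : ∀ x ∈ K₁, 1 ≤ f₁ x := by
    intro x hx
    have : φ x = 1 := hφ1 hx
    simpa [f₁, this] using hf1 x (Or.inl hx)
  have h₂1 : ∀ x ∈ K₂, 1 ≤ f₂ x := by
    intro x hx
    have : φ x = 0 := hφ0 hx
    simpa [f₂, this] using hf1 x (Or.inr hx)
  have hsum : Λ f = Λ f₁ + Λ f₂ := by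
    rw [← h.add _ _ h₁c h₂c]
    congr 1
    funext x
    simp [f₁, f₂]; ring
  rw [hsum]
  exact add_le_add (lamK_le h h₁c h₁0 h₁1) (lamK_le h h₂c h₂0 h₂1)

theorem lamK_image (h : Pos Λ) (e : X ≃ₜ X)
    (he : ∀ f : X → ℝ, Continuous f → Λ (fun x => f (e x)) = Λ f) (K : Set X) :
    lamK Λ (e '' K) = lamK Λ K := by
  unfold lamK
  congr 1
  apply Set.Subset.antisymm
  · rintro y ⟨f, hfc, hf0, hf1, rfl⟩
    refine ⟨fun x => f (e x), hfc.comp e.continuous, fun x => hf0 _, ?_, he f hfc⟩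
    intro x hx
    exact hf1 _ ⟨x, hx, rfl⟩
  · rintro y ⟨f, hfc, hf0, hf1, rfl⟩
    have hc : Continuous fun x => f (e.symm x) := hfc.comp e.symm.continuous
    refine ⟨fun x => f (e.symm x), hc, fun x => hf0 _, ?_, ?_⟩
    · rintro z ⟨x, hx, rfl⟩
      simpa using hf1 x hx
    · have := he (fun x => f (e.symm x)) hc
      simp only [Homeomorph.symm_apply_apply] at this
      exact this.symm

theorem lamK_univ (h : Pos Λ) : lamK Λ (univ : Set X) = 1 := by
  refine le_antisymm (lamK_le_one h _) (le_csInf (testSet_nonempty h _) ?_)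
  rintro y ⟨f, hfc, hf0, hf1, rfl⟩
  have := h.mono (fun _ => 1) f continuous_const hfc (fun x => hf1 x (mem_univ x))
  simpa [h.one] using this

theorem Pos.sum (h : Pos Λ) {ι : Type*} (s : Finset ι) (g : ι → X → ℝ)
    (hg : ∀ i ∈ s, Continuous (g i)) :
    Λ (fun x => ∑ i ∈ s, g i x) = ∑ i ∈ s, Λ (g i) := by
  classical
  induction s using Finset.induction_on with
  | empty => simpa using h.const 0
  | insert a s ha ih =>
    have hga : Continuous (g a) := hg a (Finset.mem_insert_self a s)
    have hgs : Continuous fun x => ∑ i ∈ s, g i x :=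
      continuous_finset_sum _ fun i hi => hg i (Finset.mem_insert_of_mem hi)
    have : (fun x => ∑ i ∈ insert a s, g i x)
        = fun x => g a x + ∑ i ∈ s, g i x := by
      funext x; rw [Finset.sum_insert ha]
    rw [this, h.add _ _ hga hgs, ih (fun i hi => hg i (Finset.mem_insert_of_mem hi)),
      Finset.sum_insert ha]

/-- The content associated to a positive functional. -/
noncomputable def mkContent (Λ : (X → ℝ) → ℝ) (h : Pos Λ) : Content X where
  toFun K := (⟨lamK Λ K, lamK_nonneg h K⟩ : ℝ≥0)
  mono' K₁ K₂ hK := by exact_mod_cast lamK_mono h hK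
  sup_disjoint' K₁ K₂ hd _ _ := by
    have := lamK_union_eq h K₁.2 K₂.2 hd
    apply NNReal.coe_injective
    change lamK Λ _ = lamK Λ _ + lamK Λ _
    simpa [Compacts.coe_sup] using this
  sup_le' K₁ K₂ := by
    have := lamK_union_le h (K₁ : Set X) (K₂ : Set X)
    change lamK Λ _ ≤ lamK Λ _ + lamK Λ _
    simpa [Compacts.coe_sup] using this

theorem mkContent_coe (h : Pos Λ) (K : Compacts X) :
    ((mkContent Λ h).toFun K : ℝ) = lamK Λ K := rfl

variable [MeasurableSpace X] [BorelSpace X]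

/-- The measure associated to a positive functional. -/
noncomputable def mkMeasure (Λ : (X → ℝ) → ℝ) (h : Pos Λ) : Measure X :=
  (mkContent Λ h).measure

instance mkMeasure_prob (h : Pos Λ) : IsProbabilityMeasure (mkMeasure Λ h) := by
  constructor
  rw [mkMeasure, Content.measure_apply _ MeasurableSet.univ,
    Content.outerMeasure_of_isOpen _ _ isOpen_univ]
  have : (mkContent Λ h).innerContent ⟨univ, isOpen_univ⟩
      = (mkContent Λ h) ⟨univ, isCompact_univ⟩ :=
    Content.innerContent_of_isCompact _ isCompact_univ isOpen_univ
  rw [this]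
  have h1 : ((mkContent Λ h).toFun ⟨univ, isCompact_univ⟩ : ℝ≥0) = 1 := by
    apply NNReal.coe_injective
    exact lamK_univ h
  show ((mkContent Λ h).toFun ⟨univ, isCompact_univ⟩ : ℝ≥0∞) = 1
  rw [h1]
  rfl

theorem mkMeasure_preserving (h : Pos Λ) (e : X ≃ₜ X)
    (he : ∀ f : X → ℝ, Continuous f → Λ (fun x => f (e x)) = Λ f) :
    MeasurePreserving e (mkMeasure Λ h) (mkMeasure Λ h) := by
  have hkey : ∀ ⦃K : Compacts X⦄,
      (mkContent Λ h) (K.map e e.continuous) = (mkContent Λ h) K := by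
    intro K
    show ((mkContent Λ h).toFun _ : ℝ≥0∞) = ((mkContent Λ h).toFun _ : ℝ≥0∞)
    have : (mkContent Λ h).toFun (K.map e e.continuous) = (mkContent Λ h).toFun K := by
      apply NNReal.coe_injective
      show ((mkContent Λ h).toFun _ : ℝ) = ((mkContent Λ h).toFun _ : ℝ)
      rw [mkContent_coe, mkContent_coe]
      simpa [Compacts.coe_map] using lamK_image h e he (K : Set X)
    rw [this]
  refine ⟨e.continuous.measurable, ?_⟩
  apply Measure.ext
  intro s hs
  rw [Measure.map_apply e.continuous.measurable hs, mkMeasure,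
    Content.measure_apply _ (hs.preimage e.continuous.measurable),
    Content.measure_apply _ hs]
  exact (mkContent Λ h).outerMeasure_preimage e hkey s


theorem mkMeasure_integral_le (h : Pos Λ) (f : X → ℝ) (hf : Continuous f)
    (h0 : ∀ x, 0 ≤ f x) : ∫ x, f x ∂(mkMeasure Λ h) ≤ Λ f := by
  classical
  set μ := mkMeasure Λ h with hμ
  haveI : IsProbabilityMeasure μ := mkMeasure_prob h
  refine le_of_forall_pos_le_add ?_
  intro η hη
  set δ : ℝ := η / 2 with hδdef
  have hδ : 0 < δ := by positivity
  obtain ⟨M₀, hM₀⟩ := (isCompact_range hf).bddAbove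
  set M : ℝ := max M₀ 1 with hMdef
  have hM1 : (0:ℝ) < M := lt_of_lt_of_le one_pos (le_max_right _ _)
  have hMb : ∀ x, f x ≤ M := fun x => le_trans (hM₀ (mem_range_self x)) (le_max_left _ _)
  set N : ℕ := ⌈M / δ⌉₊ with hNdef
  set U : ℕ → Set X := fun k => {x | (k:ℝ) * δ < f x} with hUdef
  have hUopen : ∀ k, IsOpen (U k) := fun k => isOpen_lt continuous_const hf
  have hUmeas : ∀ k, MeasurableSet (U k) := fun k => (hUopen k).measurableSet
  have hdenom : (0:ℝ) < 2 * ((N:ℝ) * δ + 1) := by positivity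
  set ε' : ℝ≥0 := Real.toNNReal (η / (2 * ((N:ℝ) * δ + 1))) with hε'
  have hε'pos : (0:ℝ) < η / (2 * ((N:ℝ) * δ + 1)) := by positivity
  have hε'ne : ε' ≠ 0 := by
    simp only [hε', ne_eq, Real.toNNReal_eq_zero, not_le]
    exact hε'pos
  have hε'coe : (ε' : ℝ) = η / (2 * ((N:ℝ) * δ + 1)) := Real.coe_toNNReal _ hε'pos.le
  -- choose Urysohn functions
  have key : ∀ k : ℕ, ∃ φ : X → ℝ, Continuous φ ∧ (∀ x, 0 ≤ φ x) ∧ (∀ x, φ x ≤ 1) ∧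
      (∀ x, x ∉ U k → φ x = 0) ∧ (μ (U k)).toReal ≤ Λ φ + (ε' : ℝ) := by
    intro k
    have hfin : (mkContent Λ h).innerContent ⟨U k, hUopen k⟩ ≠ ∞ := by
      refine ne_top_of_le_ne_top ?_
        ((mkContent Λ h).innerContent_le ⟨U k, hUopen k⟩ ⟨univ, isCompact_univ⟩ (subset_univ _))
      exact ENNReal.coe_ne_top
    obtain ⟨K, hKU, hK⟩ := (mkContent Λ h).innerContent_exists_compact hfin hε'ne
    obtain ⟨φ, hφ0, hφ1, hφmem⟩ := exists_continuous_zero_one_of_isClosed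
      (hUopen k).isClosed_compl K.2.isClosed
      (Set.disjoint_left.mpr fun a ha haK => ha (hKU haK))
    refine ⟨φ, φ.continuous, fun x => (hφmem x).1, fun x => (hφmem x).2,
      fun x hx => hφ0 hx, ?_⟩
    have hμU : μ (U k) = (mkContent Λ h).innerContent ⟨U k, hUopen k⟩ := by
      rw [hμ, mkMeasure, Content.measure_apply _ (hUmeas k),
        Content.outerMeasure_of_isOpen _ _ (hUopen k)]
    have hlam : lamK Λ (K : Set X) ≤ Λ φ := by
      refine lamK_le h φ.continuous (fun x => (hφmem x).1) ?_
      intro x hx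
      have := hφ1 hx
      simp only [Pi.one_apply] at this
      exact this.ge
    have hKle : μ (U k) ≤ ((mkContent Λ h).toFun K : ℝ≥0∞) + (ε' : ℝ≥0∞) := by
      rw [hμU]; exact hK
    have htr : (μ (U k)).toReal ≤ lamK Λ (K : Set X) + (ε' : ℝ) := by
      have := ENNReal.toReal_mono (by simp) hKle
      rw [ENNReal.toReal_add (by simp) (by simp)] at this
      rw [ENNReal.coe_toReal, ENNReal.coe_toReal, mkContent_coe h K] at this
      exact this
    linarith
  choose φ hφc hφ0 hφ1 hφz hφμ using key
  -- counting function
  have hsum_ind : ∀ x : X, ∑ k ∈ Finset.range N, (U k).indicator (fun _ => δ) x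
      = (((Finset.range N).filter (fun k => x ∈ U k)).card : ℝ) * δ := by
    intro x
    rw [Finset.sum_indicator_eq_sum_filter]
    rw [Finset.sum_const, nsmul_eq_mul]
  -- pointwise lower bound
  have claim1 : ∀ x, f x ≤ ∑ k ∈ Finset.range N, (U k).indicator (fun _ => δ) x := by
    intro x
    rw [hsum_ind x]
    rcases (h0 x).eq_or_lt with he | hlt
    · calc f x = 0 := he.symm
        _ ≤ _ := mul_nonneg (Nat.cast_nonneg _) hδ.le
    · have hmle : ⌈f x / δ⌉₊ ≤ N := by
        rw [hNdef]
        exact Nat.ceil_le_ceil (by gcongr; exact hMb x)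
      have hsub : Finset.range ⌈f x / δ⌉₊ ⊆ (Finset.range N).filter (fun k => x ∈ U k) := by
        intro j hj
        rw [Finset.mem_range] at hj
        refine Finset.mem_filter.mpr ⟨Finset.mem_range.mpr (lt_of_lt_of_le hj hmle), ?_⟩
        have hj' : (j:ℝ) < f x / δ := Nat.lt_ceil.mp hj
        show (j:ℝ) * δ < f x
        exact (lt_div_iff₀ hδ).mp hj'
      have hcard : (⌈f x / δ⌉₊ : ℝ) ≤ (((Finset.range N).filter (fun k => x ∈ U k)).card : ℝ) := by
        exact_mod_cast (by simpa using Finset.card_le_card hsub)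
      have h1 : f x ≤ (⌈f x / δ⌉₊ : ℝ) * δ := by
        rw [← div_le_iff₀ hδ]
        exact Nat.le_ceil _
      calc f x ≤ (⌈f x / δ⌉₊ : ℝ) * δ := h1
        _ ≤ _ := by gcongr
  -- pointwise upper bound for test sum
  have claim2 : ∀ x, ∑ k ∈ Finset.range N, δ * φ k x ≤ f x + δ := by
    intro x
    have hterm : ∀ k ∈ Finset.range N, δ * φ k x ≤ (U k).indicator (fun _ => δ) x := by
      intro k _
      by_cases hx : x ∈ U k
      · simp only [indicator_of_mem hx]
        nlinarith [hφ1 k x, hδ]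
      · simp [indicator_of_notMem hx, hφz k x hx]
    have h2 : ∑ k ∈ Finset.range N, δ * φ k x
        ≤ (((Finset.range N).filter (fun k => x ∈ U k)).card : ℝ) * δ := by
      rw [← hsum_ind x]
      exact Finset.sum_le_sum hterm
    have hsubs : (Finset.range N).filter (fun k => x ∈ U k) ⊆ Finset.range ⌈f x / δ⌉₊ := by
      intro k hk
      obtain ⟨-, hkx⟩ := Finset.mem_filter.mp hk
      rw [Finset.mem_range, Nat.lt_ceil]
      exact (lt_div_iff₀ hδ).mpr hkx
    have hcard : (((Finset.range N).filter (fun k => x ∈ U k)).card : ℝ) ≤ (⌈f x / δ⌉₊ : ℝ) := by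
      exact_mod_cast (by simpa using Finset.card_le_card hsubs)
    have hceil : (⌈f x / δ⌉₊ : ℝ) * δ ≤ f x + δ := by
      have := Nat.ceil_lt_add_one (a := f x / δ) (div_nonneg (h0 x) hδ.le)
      have h3 : (⌈f x / δ⌉₊ : ℝ) * δ ≤ (f x / δ + 1) * δ := by nlinarith
      calc (⌈f x / δ⌉₊ : ℝ) * δ ≤ (f x / δ + 1) * δ := h3
        _ = f x + δ := by field_simp
    calc ∑ k ∈ Finset.range N, δ * φ k x
        ≤ (((Finset.range N).filter (fun k => x ∈ U k)).card : ℝ) * δ := h2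
      _ ≤ (⌈f x / δ⌉₊ : ℝ) * δ := by gcongr
      _ ≤ f x + δ := hceil
  -- integrability
  have hint_f : Integrable f μ := by
    refine hf.integrable_of_hasCompactSupport ?_
    exact IsCompact.of_isClosed_subset isCompact_univ (isClosed_tsupport f) (subset_univ _)
  have hint_ind : ∀ k : ℕ, Integrable ((U k).indicator (fun _ => δ)) μ := by
    intro k
    rw [integrable_indicator_iff (hUmeas k)]
    exact integrableOn_const (measure_lt_top μ _).ne
  have hint_sum : Integrable (fun x => ∑ k ∈ Finset.range N, (U k).indicator (fun _ => δ) x) μ :=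
    integrable_finset_sum _ (fun k _ => hint_ind k)
  have step1 : ∫ x, f x ∂μ ≤ ∫ x, (∑ k ∈ Finset.range N, (U k).indicator (fun _ => δ) x) ∂μ :=
    integral_mono hint_f hint_sum claim1
  have step2 : ∫ x, (∑ k ∈ Finset.range N, (U k).indicator (fun _ => δ) x) ∂μ
      = ∑ k ∈ Finset.range N, (μ (U k)).toReal * δ := by
    rw [integral_finset_sum _ (fun k _ => hint_ind k)]
    refine Finset.sum_congr rfl fun k _ => ?_
    rw [integral_indicator_const _ (hUmeas k)]
    simp [smul_eq_mul]
    exact Or.inl rfl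
  have step3 : ∑ k ∈ Finset.range N, (μ (U k)).toReal * δ
      ≤ ∑ k ∈ Finset.range N, (Λ (φ k) + (ε' : ℝ)) * δ := by
    refine Finset.sum_le_sum fun k _ => ?_
    exact mul_le_mul_of_nonneg_right (hφμ k) hδ.le
  have step5 : ∑ k ∈ Finset.range N, δ * Λ (φ k)
      = Λ (fun x => ∑ k ∈ Finset.range N, δ * φ k x) := by
    rw [Pos.sum h (Finset.range N) (fun k x => δ * φ k x)
      (fun k _ => continuous_const.mul (hφc k))]
    refine (Finset.sum_congr rfl fun k _ => ?_).symm
    exact h.smul δ (φ k) (hφc k)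
  have step6 : Λ (fun x => ∑ k ∈ Finset.range N, δ * φ k x) ≤ Λ f + δ := by
    have hc1 : Continuous fun x => ∑ k ∈ Finset.range N, δ * φ k x :=
      continuous_finset_sum _ fun k _ => continuous_const.mul (hφc k)
    have hc2 : Continuous fun x => f x + δ := hf.add continuous_const
    have := h.mono _ _ hc1 hc2 claim2
    rwa [h.add f (fun _ => δ) hf continuous_const, h.const δ] at this
  have hεbound : (N:ℝ) * ((ε' : ℝ) * δ) ≤ η / 2 := by
    rw [hε'coe]
    rw [show (N:ℝ) * (η / (2 * ((N:ℝ) * δ + 1)) * δ) = ((N:ℝ) * δ * η) / (2 * ((N:ℝ) * δ + 1))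
      from by ring]
    rw [div_le_div_iff₀ hdenom two_pos]
    nlinarith [Nat.cast_nonneg (α := ℝ) N, hδ.le, hη.le]
  calc ∫ x, f x ∂μ ≤ ∑ k ∈ Finset.range N, (μ (U k)).toReal * δ := by rw [← step2]; exact step1
    _ ≤ ∑ k ∈ Finset.range N, (Λ (φ k) + (ε' : ℝ)) * δ := step3
    _ = (∑ k ∈ Finset.range N, δ * Λ (φ k)) + (N:ℝ) * ((ε' : ℝ) * δ) := by
        have hrw : ∀ k ∈ Finset.range N, (Λ (φ k) + (ε':ℝ)) * δ = δ * Λ (φ k) + (ε':ℝ) * δ :=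
          fun k _ => by ring
        rw [Finset.sum_congr rfl hrw, Finset.sum_add_distrib, Finset.sum_const,
          Finset.card_range, nsmul_eq_mul]
    _ ≤ (Λ f + δ) + η / 2 := by
        rw [step5]
        exact add_le_add step6 hεbound
    _ ≤ Λ f + η := by rw [hδdef]; linarith

end Stmt10Aux

open MeasureTheory Filter Topology

/-- If every invariant Borel probability measure `μ` of a
continuous flow `A` on a compact metric space satisfies `∫ g dμ ≥ 1 - 3ε`, then
there is `T > 0` such that all Birkhoff averages of `g` over times `t ≥ T`
exceed `1 - 4ε`. -/
theorem stmt10 {X : Type*} [MetricSpace X] [CompactSpace X]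
    [MeasurableSpace X] [BorelSpace X]
    (A : ℝ → X → X)
    (hA0 : ∀ p, A 0 p = p)
    (hAflow : ∀ t s p, A (t + s) p = A t (A s p))
    (hAcont : Continuous fun q : ℝ × X => A q.1 q.2)
    (g : X → ℝ) (hg : Continuous g) (ε : ℝ) (hε : 0 < ε)
    (hinv : ∀ μ : Measure X, IsProbabilityMeasure μ →
      (∀ t : ℝ, MeasurePreserving (A t) μ μ) → 1 - 3 * ε ≤ ∫ x, g x ∂μ) :
    ∃ T > (0:ℝ), ∀ t ≥ T, ∀ p : X,
      1 - 4 * ε < t⁻¹ * ∫ s in (0:ℝ)..t, g (A s p) := by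
  classical
  by_contra hcon
  push_neg at hcon
  have hsel : ∀ n : ℕ, ∃ t ≥ ((n:ℝ) + 1), ∃ p : X,
      t⁻¹ * ∫ s in (0:ℝ)..t, g (A s p) ≤ 1 - 4 * ε := fun n => by
    obtain ⟨t, ht, p, hp⟩ := hcon ((n:ℝ) + 1) (by positivity)
    exact ⟨t, ht, p, hp⟩
  choose t ht p hp using hsel
  have htpos : ∀ n, 0 < t n := fun n => lt_of_lt_of_le (by positivity) (ht n)
  have hcontAt : ∀ r : ℝ, Continuous (A r) := fun r =>
    hAcont.comp (continuous_const.prodMk continuous_id)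
  have horb : ∀ (q : X) (f : X → ℝ), Continuous f →
      Continuous fun s : ℝ => f (A s q) := fun q f hfc =>
    hfc.comp (hAcont.comp (continuous_id.prodMk continuous_const))
  -- Birkhoff averages along the chosen orbits
  set avg : ℕ → (X → ℝ) → ℝ :=
    fun n f => (t n)⁻¹ * ∫ s in (0:ℝ)..(t n), f (A s (p n)) with havgdef
  have hII : ∀ (n : ℕ) (a b : ℝ) (f : X → ℝ), Continuous f →
      IntervalIntegrable (fun s => f (A s (p n))) MeasureTheory.volume a b :=
    fun n a b f hfc => (horb (p n) f hfc).intervalIntegrable a b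
  have havg_add : ∀ (n : ℕ) (f f' : X → ℝ), Continuous f → Continuous f' →
      avg n (fun x => f x + f' x) = avg n f + avg n f' := by
    intro n f f' hfc hfc'
    simp only [havgdef]
    rw [intervalIntegral.integral_add (hII n 0 (t n) f hfc) (hII n 0 (t n) f' hfc')]
    ring
  have havg_smul : ∀ (n : ℕ) (c : ℝ) (f : X → ℝ), Continuous f →
      avg n (fun x => c * f x) = c * avg n f := by
    intro n c f hfc
    simp only [havgdef]
    rw [intervalIntegral.integral_const_mul]
    ring
  have havg_mono : ∀ (n : ℕ) (f f' : X → ℝ), Continuous f → Continuous f' →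
      (∀ x, f x ≤ f' x) → avg n f ≤ avg n f' := by
    intro n f f' hfc hfc' hle
    simp only [havgdef]
    have := intervalIntegral.integral_mono_on (htpos n).le (hII n 0 (t n) f hfc)
      (hII n 0 (t n) f' hfc') (fun s _ => hle (A s (p n)))
    have hnn : (0:ℝ) ≤ (t n)⁻¹ := (inv_pos.mpr (htpos n)).le
    exact mul_le_mul_of_nonneg_left this hnn
  have havg_one : ∀ n : ℕ, avg n (fun _ => 1) = 1 := by
    intro n
    simp only [havgdef]
    rw [intervalIntegral.integral_const]
    simp [inv_mul_cancel₀ (htpos n).ne']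
  have hbnd : ∀ f : X → ℝ, Continuous f → ∃ C : ℝ, 0 ≤ C ∧ ∀ x, |f x| ≤ C := by
    intro f hfc
    obtain ⟨C₀, hC₀⟩ := (isCompact_range (hfc.abs)).bddAbove
    refine ⟨max C₀ 0, le_max_right _ _, fun x => ?_⟩
    exact le_trans (hC₀ (Set.mem_range_self x)) (le_max_left _ _)
  have havg_bound : ∀ (n : ℕ) (f : X → ℝ) (C : ℝ), (∀ x, |f x| ≤ C) → |avg n f| ≤ C := by
    intro n f C hC
    simp only [havgdef]
    rw [abs_mul, abs_inv, abs_of_pos (htpos n)]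
    have hnorm : ‖∫ s in (0:ℝ)..(t n), f (A s (p n))‖ ≤ C * |t n - 0| := by
      apply intervalIntegral.norm_integral_le_of_norm_le_const
      intro s _
      exact hC (A s (p n))
    rw [Real.norm_eq_abs] at hnorm
    rw [sub_zero, abs_of_pos (htpos n)] at hnorm
    calc (t n)⁻¹ * |∫ s in (0:ℝ)..(t n), f (A s (p n))|
        ≤ (t n)⁻¹ * (C * t n) := by
          exact mul_le_mul_of_nonneg_left hnorm (inv_pos.mpr (htpos n)).le
      _ = C := by
          rw [mul_comm C (t n), ← mul_assoc, inv_mul_cancel₀ (htpos n).ne', one_mul]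
  -- the ultrafilter limit functional
  set U : Ultrafilter ℕ := Ultrafilter.of Filter.atTop with hUdef
  have hUle : (U : Filter ℕ) ≤ Filter.atTop := Ultrafilter.of_le _
  have hlim : ∀ f : X → ℝ, Continuous f →
      ∃ a : ℝ, Filter.Tendsto (fun n => avg n f) (U : Filter ℕ) (𝓝 a) := by
    intro f hfc
    obtain ⟨C, hC0, hC⟩ := hbnd f hfc
    have hmem : (U.map (fun n => avg n f) : Filter ℝ) ≤ Filter.principal (Set.Icc (-C) C) := by
      rw [Filter.le_principal_iff]
      rw [Ultrafilter.mem_coe, Ultrafilter.mem_map]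
      apply Filter.univ_mem'
      intro n
      exact Set.mem_Icc.mpr (abs_le.mp (havg_bound n f C hC))
    obtain ⟨a, -, ha⟩ := (isCompact_Icc (a := -C) (b := C)).ultrafilter_le_nhds
      (U.map (fun n => avg n f)) hmem
    exact ⟨a, ha⟩
  set Λ : (X → ℝ) → ℝ := fun f =>
    if hfc : ∃ a, Filter.Tendsto (fun n => avg n f) (U : Filter ℕ) (𝓝 a)
    then hfc.choose else 0 with hΛdef
  have hΛ : ∀ f : X → ℝ, Continuous f →
      Filter.Tendsto (fun n => avg n f) (U : Filter ℕ) (𝓝 (Λ f)) := by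
    intro f hfc
    have hfex := hlim f hfc
    have hval : Λ f = hfex.choose := by rw [hΛdef]; exact dif_pos hfex
    rw [hval]
    exact hfex.choose_spec
  have hpos : Stmt10Aux.Pos Λ := by
    constructor
    · intro f f' hfc hfc'
      have h1 := (hΛ f hfc).add (hΛ f' hfc')
      have h2 := hΛ (fun x => f x + f' x) (hfc.add hfc')
      have heq : (fun n => avg n (fun x => f x + f' x)) = fun n => avg n f + avg n f' :=
        funext fun n => havg_add n f f' hfc hfc'
      rw [heq] at h2
      exact tendsto_nhds_unique h2 h1
    · intro c f hfc
      have h1 := (hΛ f hfc).const_mul c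
      have h2 := hΛ (fun x => c * f x) (continuous_const.mul hfc)
      have heq : (fun n => avg n (fun x => c * f x)) = fun n => c * avg n f :=
        funext fun n => havg_smul n c f hfc
      rw [heq] at h2
      exact tendsto_nhds_unique h2 h1
    · intro f f' hfc hfc' hle
      exact le_of_tendsto_of_tendsto' (hΛ f hfc) (hΛ f' hfc')
        (fun n => havg_mono n f f' hfc hfc' hle)
    · have h2 := hΛ (fun _ => (1:ℝ)) continuous_const
      have heq : (fun n => avg n (fun _ => 1)) = fun _ => (1:ℝ) :=
        funext fun n => havg_one n
      rw [heq] at h2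
      exact tendsto_nhds_unique h2 tendsto_const_nhds
  -- invariance of the functional
  have htinf : Filter.Tendsto (fun n => (t n)⁻¹) Filter.atTop (𝓝 0) := by
    apply tendsto_inv_atTop_zero.comp
    apply Filter.tendsto_atTop_mono ht
    exact Filter.tendsto_atTop_add_const_right _ 1 tendsto_natCast_atTop_atTop
  have hshift : ∀ (r : ℝ) (f : X → ℝ), Continuous f →
      Λ (fun x => f (A r x)) = Λ f := by
    intro r f hfc
    obtain ⟨C, hC0, hC⟩ := hbnd f hfc
    have hfr : Continuous fun x => f (A r x) := hfc.comp (hcontAt r)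
    -- the difference of averages tends to zero
    have hdiffle : ∀ n, |avg n (fun x => f (A r x)) - avg n f| ≤ (t n)⁻¹ * (2 * C * |r|) := by
      intro n
      have hkey : avg n (fun x => f (A r x)) - avg n f
          = (t n)⁻¹ * ((∫ s in (t n)..(t n + r), f (A s (p n)))
            - ∫ s in (0:ℝ)..r, f (A s (p n))) := by
        have h1 : (∫ s in (0:ℝ)..(t n), f (A r (A s (p n))))
            = ∫ s in (0:ℝ)..(t n), f (A (s + r) (p n)) := by
          congr 1
          funext s
          rw [← hAflow r s (p n), add_comm]
        have h2 : (∫ s in (0:ℝ)..(t n), f (A (s + r) (p n)))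
            = ∫ s in (0+r)..(t n + r), f (A s (p n)) := by
          exact intervalIntegral.integral_comp_add_right (fun s => f (A s (p n))) r
        have h3 : (∫ s in (r:ℝ)..(t n + r), f (A s (p n)))
            = (∫ s in (r:ℝ)..(t n), f (A s (p n))) + ∫ s in (t n)..(t n + r), f (A s (p n)) :=
          (intervalIntegral.integral_add_adjacent_intervals
            (hII n r (t n) f hfc) (hII n (t n) (t n + r) f hfc)).symm
        have h4 : (∫ s in (0:ℝ)..(t n), f (A s (p n)))
            = (∫ s in (0:ℝ)..r, f (A s (p n))) + ∫ s in (r:ℝ)..(t n), f (A s (p n)) :=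
          (intervalIntegral.integral_add_adjacent_intervals
            (hII n 0 r f hfc) (hII n r (t n) f hfc)).symm
        simp only [havgdef]
        rw [h1, h2, zero_add, h3, h4]
        ring
      rw [hkey, abs_mul, abs_inv, abs_of_pos (htpos n)]
      have hb1 : ‖∫ s in (t n)..(t n + r), f (A s (p n))‖ ≤ C * |t n + r - t n| :=
        intervalIntegral.norm_integral_le_of_norm_le_const fun s _ => hC (A s (p n))
      have hb2 : ‖∫ s in (0:ℝ)..r, f (A s (p n))‖ ≤ C * |r - 0| :=
        intervalIntegral.norm_integral_le_of_norm_le_const fun s _ => hC (A s (p n))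
      simp only [add_sub_cancel_left, sub_zero, Real.norm_eq_abs] at hb1 hb2
      have : |(∫ s in (t n)..(t n + r), f (A s (p n))) - ∫ s in (0:ℝ)..r, f (A s (p n))|
          ≤ 2 * C * |r| := by
        calc |(∫ s in (t n)..(t n + r), f (A s (p n))) - ∫ s in (0:ℝ)..r, f (A s (p n))|
            ≤ |∫ s in (t n)..(t n + r), f (A s (p n))| + |∫ s in (0:ℝ)..r, f (A s (p n))| :=
              abs_sub _ _
          _ ≤ C * |r| + C * |r| := add_le_add hb1 hb2
          _ = 2 * C * |r| := by ring
      exact mul_le_mul_of_nonneg_left this (inv_pos.mpr (htpos n)).le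
    have hzero : Filter.Tendsto (fun n => avg n (fun x => f (A r x)) - avg n f)
        Filter.atTop (𝓝 0) := by
      refine squeeze_zero_norm (a := fun n => (t n)⁻¹ * (2 * C * |r|)) (fun n => ?_) ?_
      · rw [Real.norm_eq_abs]; exact hdiffle n
      · simpa using htinf.mul_const (2 * C * |r|)
    have hzero' : Filter.Tendsto (fun n => avg n (fun x => f (A r x)) - avg n f)
        (U : Filter ℕ) (𝓝 0) := hzero.mono_left hUle
    have h1 : Filter.Tendsto (fun n => avg n f + (avg n (fun x => f (A r x)) - avg n f))
        (U : Filter ℕ) (𝓝 (Λ f + 0)) := (hΛ f hfc).add hzero'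
    have heq : (fun n => avg n f + (avg n (fun x => f (A r x)) - avg n f))
        = fun n => avg n (fun x => f (A r x)) := by funext n; ring
    rw [heq, add_zero] at h1
    exact tendsto_nhds_unique (hΛ (fun x => f (A r x)) hfr) h1
  -- the invariant measure
  set μ : Measure X := Stmt10Aux.mkMeasure Λ hpos with hμdef
  haveI hprob : IsProbabilityMeasure μ := Stmt10Aux.mkMeasure_prob hpos
  have hinv_flow : ∀ r : ℝ, MeasurePreserving (A r) μ μ := by
    intro r
    have hlinv : ∀ x, A (-r) (A r x) = x := fun x => by
      rw [← hAflow]; simp [hA0]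
    have hrinv : ∀ x, A r (A (-r) x) = x := fun x => by
      rw [← hAflow]; simp [hA0]
    exact Stmt10Aux.mkMeasure_preserving hpos
      ⟨⟨A r, A (-r), hlinv, hrinv⟩, hcontAt r, hcontAt (-r)⟩
      (fun f hfc => hshift r f hfc)
  have hge := hinv μ hprob hinv_flow
  -- ∫ g dμ ≤ Λ g
  obtain ⟨C, hC0, hC⟩ := hbnd g hg
  have hint1 : ∫ x, (g x + C) ∂μ ≤ Λ (fun x => g x + C) := by
    refine Stmt10Aux.mkMeasure_integral_le hpos _ (hg.add continuous_const) fun x => ?_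
    linarith [(abs_le.mp (hC x)).1]
  have hgint : Integrable g μ := by
    refine hg.integrable_of_hasCompactSupport ?_
    exact IsCompact.of_isClosed_subset isCompact_univ (isClosed_tsupport g) (Set.subset_univ _)
  have hint2 : ∫ x, (g x + C) ∂μ = (∫ x, g x ∂μ) + C := by
    rw [integral_add hgint (integrable_const C)]
    simp
  have hint3 : Λ (fun x => g x + C) = Λ g + C := by
    rw [hpos.add g (fun _ => C) hg continuous_const, hpos.const]
  have hΛg : Λ g ≤ 1 - 4 * ε :=
    le_of_tendsto (hΛ g hg) (Filter.Eventually.of_forall fun n => hp n)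
  linarith
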